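/- Let n ≥ 1 and let I^1, I^2, I^3 be real 4n×4n matrices, each skew-symmetric ((I^p)^T = −I^p), satisfying the quaternion algebra I^p I^q = −δ^{pq}·1 + Σ_r ε^{pqr} I^r. Then there exists an orthogonal matrix R ∈ O(4n) such that R^T I^1 R = diag(𝓘,…,𝓘), R^T I^2 R = diag(𝓙,…,𝓙) and R^T I^3 R = diag(𝓚,…,𝓚), each block-diagonal with n identical 4×4 blocks. -/

import Mathlib

open Matrix

noncomputable section

/-- The totally antisymmetric symbol `ε^{pqr}` on `{0,1,2}` with `ε^{012} = 1`. -/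
def epsLC (p q r : Fin 3) : ℝ :=
  ((((q : ℕ) : ℝ) - ((p : ℕ) : ℝ)) * (((r : ℕ) : ℝ) - ((q : ℕ) : ℝ)) *
    (((r : ℕ) : ℝ) - ((p : ℕ) : ℝ))) / 2

/-- The canonical `4×4` quaternionic structure `𝓘`. -/
def quatI : Matrix (Fin 4) (Fin 4) ℝ :=
  !![0, 0, 0, 1; 0, 0, 1, 0; 0, -1, 0, 0; -1, 0, 0, 0]

/-- The canonical `4×4` quaternionic structure `𝓙`. -/
def quatJ : Matrix (Fin 4) (Fin 4) ℝ :=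
  !![0, 0, 1, 0; 0, 0, 0, -1; -1, 0, 0, 0; 0, 1, 0, 0]

/-- The canonical `4×4` quaternionic structure `𝓚`. -/
def quatK : Matrix (Fin 4) (Fin 4) ℝ :=
  !![0, 1, 0, 0; -1, 0, 0, 0; 0, 0, 0, 1; 0, 0, -1, 0]

/-- The triple `(𝓘, 𝓙, 𝓚)`. -/
def canQ : Fin 3 → Matrix (Fin 4) (Fin 4) ℝ := ![quatI, quatJ, quatK]


section Aux

variable {m' : Type*} [Fintype m'] [DecidableEq m']

/-- The auxiliary quadruple `(I¹, -I², I³, 1)`. -/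
def fQ (I : Fin 3 → Matrix m' m' ℝ) : Fin 4 → Matrix m' m' ℝ :=
  ![I 0, -(I 1), I 2, 1]

lemma fQ0 (I : Fin 3 → Matrix m' m' ℝ) : fQ I 0 = I 0 := rfl
lemma fQ1 (I : Fin 3 → Matrix m' m' ℝ) : fQ I 1 = -(I 1) := rfl
lemma fQ2 (I : Fin 3 → Matrix m' m' ℝ) : fQ I 2 = I 2 := rfl
lemma fQ3 (I : Fin 3 → Matrix m' m' ℝ) : fQ I 3 = 1 := rfl

lemma keyAlg (I : Fin 3 → Matrix m' m' ℝ)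
    (hskew : ∀ p, (I p)ᵀ = -(I p))
    (h00 : I 0 * I 0 = -1) (h11 : I 1 * I 1 = -1) (h22 : I 2 * I 2 = -1)
    (h01 : I 0 * I 1 = I 2) (h10 : I 1 * I 0 = -(I 2))
    (h12 : I 1 * I 2 = I 0) (h21 : I 2 * I 1 = -(I 0))
    (h20 : I 2 * I 0 = I 1) (h02 : I 0 * I 2 = -(I 1))
    (a b : Fin 4) :
    ∃ s : ℝ, ∃ c : Fin 4, (fQ I a)ᵀ * fQ I b = s • fQ I c ∧
      (a = b → s = 1 ∧ c = 3) ∧ (a ≠ b → (fQ I c)ᵀ = -(fQ I c)) := by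
  have s0 : (fQ I 0)ᵀ = -(fQ I 0) := by rw [fQ0]; exact hskew 0
  have s1 : (fQ I 1)ᵀ = -(fQ I 1) := by rw [fQ1, transpose_neg, hskew 1]
  have s2 : (fQ I 2)ᵀ = -(fQ I 2) := by rw [fQ2]; exact hskew 2
  have cases4 : ∀ t : Fin 4, t = 0 ∨ t = 1 ∨ t = 2 ∨ t = 3 := by decide
  rcases cases4 a with rfl | rfl | rfl | rfl <;> rcases cases4 b with rfl | rfl | rfl | rfl
  · exact ⟨1, 3, by rw [fQ0, fQ3, hskew 0, Matrix.neg_mul, h00, neg_neg, one_smul],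
      fun _ => ⟨rfl, rfl⟩, fun h => absurd rfl h⟩
  · exact ⟨1, 2, by rw [fQ0, fQ1, fQ2, hskew 0, Matrix.neg_mul, Matrix.mul_neg, neg_neg, h01,
      one_smul], fun h => absurd h (by decide), fun _ => s2⟩
  · exact ⟨-1, 1, by rw [fQ0, fQ2, fQ1, hskew 0, Matrix.neg_mul, h02, neg_neg, neg_smul, one_smul,
      neg_neg], fun h => absurd h (by decide), fun _ => s1⟩
  · exact ⟨-1, 0, by rw [fQ0, fQ3, hskew 0, Matrix.neg_mul, Matrix.mul_one, neg_smul, one_smul],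
      fun h => absurd h (by decide), fun _ => s0⟩
  · exact ⟨-1, 2, by rw [fQ1, fQ0, fQ2, transpose_neg, hskew 1, neg_neg, h10, neg_smul, one_smul],
      fun h => absurd h (by decide), fun _ => s2⟩
  · exact ⟨1, 3, by rw [fQ1, fQ3, transpose_neg, hskew 1, neg_neg, Matrix.mul_neg, h11, neg_neg,
      one_smul], fun _ => ⟨rfl, rfl⟩, fun h => absurd rfl h⟩
  · exact ⟨1, 0, by rw [fQ1, fQ2, fQ0, transpose_neg, hskew 1, neg_neg, h12, one_smul],
      fun h => absurd h (by decide), fun _ => s0⟩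
  · exact ⟨-1, 1, by rw [fQ1, fQ3, transpose_neg, hskew 1, neg_neg, Matrix.mul_one, neg_smul,
      one_smul, neg_neg], fun h => absurd h (by decide), fun _ => s1⟩
  · exact ⟨1, 1, by rw [fQ2, fQ0, fQ1, hskew 2, Matrix.neg_mul, h20, one_smul],
      fun h => absurd h (by decide), fun _ => s1⟩
  · exact ⟨-1, 0, by rw [fQ2, fQ1, fQ0, hskew 2, Matrix.neg_mul, Matrix.mul_neg, neg_neg, h21,
      neg_smul, one_smul], fun h => absurd h (by decide), fun _ => s0⟩
  · exact ⟨1, 3, by rw [fQ2, fQ3, hskew 2, Matrix.neg_mul, h22, neg_neg, one_smul],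
      fun _ => ⟨rfl, rfl⟩, fun h => absurd rfl h⟩
  · exact ⟨-1, 2, by rw [fQ2, fQ3, hskew 2, Matrix.mul_one, neg_smul, one_smul],
      fun h => absurd h (by decide), fun _ => s2⟩
  · exact ⟨1, 0, by rw [fQ3, transpose_one, Matrix.one_mul, one_smul],
      fun h => absurd h (by decide), fun _ => s0⟩
  · exact ⟨1, 1, by rw [fQ3, transpose_one, Matrix.one_mul, one_smul],
      fun h => absurd h (by decide), fun _ => s1⟩
  · exact ⟨1, 2, by rw [fQ3, transpose_one, Matrix.one_mul, one_smul],
      fun h => absurd h (by decide), fun _ => s2⟩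
  · exact ⟨1, 3, by rw [fQ3, transpose_one, Matrix.one_mul, one_smul],
      fun _ => ⟨rfl, rfl⟩, fun h => absurd rfl h⟩

lemma mulFQ (I : Fin 3 → Matrix m' m' ℝ)
    (h00 : I 0 * I 0 = -1) (h11 : I 1 * I 1 = -1) (h22 : I 2 * I 2 = -1)
    (h01 : I 0 * I 1 = I 2) (h10 : I 1 * I 0 = -(I 2))
    (h12 : I 1 * I 2 = I 0) (h21 : I 2 * I 1 = -(I 0))
    (h20 : I 2 * I 0 = I 1) (h02 : I 0 * I 2 = -(I 1))
    (p : Fin 3) (b : Fin 4) :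
    I p * fQ I b = ∑ c, canQ p c b • fQ I c := by
  rw [Fin.sum_univ_four]
  have cases4 : ∀ t : Fin 4, t = 0 ∨ t = 1 ∨ t = 2 ∨ t = 3 := by decide
  have cases3 : ∀ t : Fin 3, t = 0 ∨ t = 1 ∨ t = 2 := by decide
  rcases cases3 p with rfl | rfl | rfl <;> rcases cases4 b with rfl | rfl | rfl | rfl <;>
    simp [canQ, quatI, quatJ, quatK, Matrix.vecHead, Matrix.vecTail, fQ0, fQ1, fQ2, fQ3,
      h00, h11, h22, h01, h10, h12, h21, h20, h02, Matrix.mul_neg, Matrix.mul_one,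
      neg_smul, one_smul]

lemma exists_perp {ι κ : Type*} [Fintype ι] [Fintype κ]
    (h : Fintype.card κ < Fintype.card ι) (g : κ → (ι → ℝ)) :
    ∃ x : ι → ℝ, x ≠ 0 ∧ ∀ i, g i ⬝ᵥ x = 0 := by
  let φ : (ι → ℝ) →ₗ[ℝ] (κ → ℝ) :=
    { toFun := fun x i => g i ⬝ᵥ x
      map_add' := by intro x y; funext i; simp [dotProduct_add]
      map_smul' := by intro c x; funext i; simp [dotProduct_smul] }
  have hker : LinearMap.ker φ ≠ ⊥ := by
    intro hb
    have hinj : Function.Injective φ := LinearMap.ker_eq_bot.mp hb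
    have := LinearMap.finrank_le_finrank_of_injective hinj
    simp [Module.finrank_pi] at this
    omega
  obtain ⟨x, hx, hx0⟩ := (Submodule.ne_bot_iff _).mp hker
  exact ⟨x, hx0, fun i => congrFun (LinearMap.mem_ker.mp hx) i⟩

lemma dot_mulVec_mulVec (A B : Matrix m' m' ℝ) (u v : m' → ℝ) :
    (A *ᵥ u) ⬝ᵥ (B *ᵥ v) = u ⬝ᵥ ((Aᵀ * B) *ᵥ v) := by
  have h : u ⬝ᵥ ((Aᵀ * B) *ᵥ v) = (A *ᵥ u) ⬝ᵥ (B *ᵥ v) := by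
    rw [← Matrix.mulVec_mulVec, Matrix.dotProduct_mulVec, Matrix.vecMul_transpose]
  exact h.symm

lemma dotProduct_sum' {ι κ : Type*} [Fintype ι] (u : ι → ℝ) (s : Finset κ) (z : κ → ι → ℝ) :
    u ⬝ᵥ (∑ d ∈ s, z d) = ∑ d ∈ s, u ⬝ᵥ z d := by
  simp only [dotProduct, Finset.sum_apply, Finset.mul_sum]
  exact Finset.sum_comm

lemma dot_skew_self (A : Matrix m' m' ℝ) (h : Aᵀ = -A) (x : m' → ℝ) :
    x ⬝ᵥ (A *ᵥ x) = 0 := by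
  have h1 : x ⬝ᵥ (A *ᵥ x) = (A *ᵥ x) ⬝ᵥ x := dotProduct_comm _ _
  have h2 : (A *ᵥ x) ⬝ᵥ x = x ⬝ᵥ (Aᵀ *ᵥ x) := by
    rw [Matrix.dotProduct_mulVec, Matrix.vecMul_transpose, dotProduct_comm]
  rw [h, Matrix.neg_mulVec, dotProduct_neg] at h2
  linarith

lemma dot_self_pos {ι : Type*} [Fintype ι] (x : ι → ℝ) (h : x ≠ 0) : 0 < x ⬝ᵥ x := by
  have hz := dotProduct_self_eq_zero (v := x)
  have nn : 0 ≤ x ⬝ᵥ x := Finset.sum_nonneg fun i _ => mul_self_nonneg _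
  rcases nn.lt_or_eq with h' | h'
  · exact h'
  · exact absurd (hz.mp h'.symm) h

end Aux

/-- Appendix B: a triple of real skew-symmetric `4n×4n` matrices
satisfying the quaternion algebra can be brought, by an orthogonal change of basis, to
the canonical block-diagonal form `diag(𝓘,…,𝓘)`, `diag(𝓙,…,𝓙)`, `diag(𝓚,…,𝓚)`. -/
theorem stmt12 (n : ℕ) (hn : 1 ≤ n)
    (I : Fin 3 → Matrix (Fin 4 × Fin n) (Fin 4 × Fin n) ℝ)
    (hskew : ∀ p, (I p)ᵀ = -(I p))
    (hquat : ∀ p q, I p * I q =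
        -(if p = q then (1 : Matrix (Fin 4 × Fin n) (Fin 4 × Fin n) ℝ) else 0) +
          ∑ r, epsLC p q r • I r) :
    ∃ R : Matrix (Fin 4 × Fin n) (Fin 4 × Fin n) ℝ,
      Rᵀ * R = 1 ∧
      ∀ p, Rᵀ * I p * R = Matrix.blockDiagonal fun _ : Fin n => canQ p := by
  -- Step 1: the nine product relations.
  have h00 : I 0 * I 0 = -1 := by
    have h := hquat 0 0; rw [Fin.sum_univ_three] at h; norm_num [epsLC] at h; exact h
  have h11 : I 1 * I 1 = -1 := by
    have h := hquat 1 1; rw [Fin.sum_univ_three] at h; norm_num [epsLC] at h; exact h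
  have h22 : I 2 * I 2 = -1 := by
    have h := hquat 2 2; rw [Fin.sum_univ_three] at h; norm_num [epsLC] at h; exact h
  have h01 : I 0 * I 1 = I 2 := by
    have h := hquat 0 1; rw [Fin.sum_univ_three] at h; norm_num [epsLC] at h; exact h
  have h10 : I 1 * I 0 = -(I 2) := by
    have h := hquat 1 0; rw [Fin.sum_univ_three] at h; norm_num [epsLC] at h; exact h
  have h12 : I 1 * I 2 = I 0 := by
    have h := hquat 1 2; rw [Fin.sum_univ_three] at h; norm_num [epsLC] at h;
    rw [if_neg (by decide)] at h; simpa using h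
  have h21 : I 2 * I 1 = -(I 0) := by
    have h := hquat 2 1; rw [Fin.sum_univ_three] at h; norm_num [epsLC] at h;
    rw [if_neg (by decide)] at h; simpa using h
  have h20 : I 2 * I 0 = I 1 := by
    have h := hquat 2 0; rw [Fin.sum_univ_three] at h; norm_num [epsLC] at h;
    rw [if_neg (by decide)] at h; simpa using h
  have h02 : I 0 * I 2 = -(I 1) := by
    have h := hquat 0 2; rw [Fin.sum_univ_three] at h; norm_num [epsLC] at h;
    rw [if_neg (by decide)] at h; simpa using h
  have kA := keyAlg I hskew h00 h11 h22 h01 h10 h12 h21 h20 h02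
  have kM := mulFQ I h00 h11 h22 h01 h10 h12 h21 h20 h02
  -- Step 2: an orthonormal quaternionic family.
  have key : ∀ m : ℕ, m ≤ n → ∃ e : Fin m → (Fin 4 × Fin n → ℝ),
      ∀ (a b : Fin 4) (j k : Fin m),
        (fQ I a *ᵥ e j) ⬝ᵥ (fQ I b *ᵥ e k) = if (a, j) = (b, k) then 1 else 0 := by
    intro m
    induction m with
    | zero => exact fun _ => ⟨fun j => j.elim0, fun a b j => j.elim0⟩
    | succ m ih =>
      intro hm
      obtain ⟨e, he⟩ := ih (Nat.le_of_succ_le hm)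
      have hcard : Fintype.card (Fin 4 × Fin m) < Fintype.card (Fin 4 × Fin n) := by
        simp only [Fintype.card_prod, Fintype.card_fin]
        omega
      obtain ⟨x, hx0, hxperp⟩ :=
        exists_perp hcard (fun ci : Fin 4 × Fin m => fQ I ci.1 *ᵥ e ci.2)
      have hxx : 0 < x ⬝ᵥ x := dot_self_pos x hx0
      set c : ℝ := Real.sqrt (x ⬝ᵥ x) with hc
      have hcpos : 0 < c := Real.sqrt_pos.mpr hxx
      have hcc : c * c = x ⬝ᵥ x := Real.mul_self_sqrt hxx.le
      set y : Fin 4 × Fin n → ℝ := c⁻¹ • x with hy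
      have hyy : y ⬝ᵥ y = 1 := by
        rw [hy, smul_dotProduct, dotProduct_smul, smul_eq_mul, smul_eq_mul,
          ← hcc]
        field_simp
      have hyperp : ∀ (d : Fin 4) (k : Fin m), (fQ I d *ᵥ e k) ⬝ᵥ y = 0 := by
        intro d k
        rw [hy, dotProduct_smul, hxperp (d, k), smul_zero]
      have hyperp' : ∀ (d : Fin 4) (k : Fin m), y ⬝ᵥ (fQ I d *ᵥ e k) = 0 := by
        intro d k
        rw [dotProduct_comm]
        exact hyperp d k
      refine ⟨Fin.snoc e y, ?_⟩
      intro a b j k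
      induction j using Fin.lastCases with
      | last =>
        induction k using Fin.lastCases with
        | last =>
          obtain ⟨s, d, heq, hdiag, hne⟩ := kA a b
          by_cases hab : a = b
          · subst hab
            obtain ⟨hs, hd⟩ := hdiag rfl
            rw [Fin.snoc_last, dot_mulVec_mulVec, heq, hs, hd, fQ3, one_smul,
              Matrix.one_mulVec, hyy, if_pos rfl]
          · rw [Fin.snoc_last, dot_mulVec_mulVec, heq, smul_mulVec,
              dotProduct_smul, dot_skew_self _ (hne hab) y, smul_zero,
              if_neg (by simp [hab])]
        | cast k =>
          obtain ⟨s, d, heq, hdiag, hne⟩ := kA a b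
          rw [Fin.snoc_last, Fin.snoc_castSucc, dot_mulVec_mulVec, heq, smul_mulVec,
            dotProduct_smul, hyperp' d k, smul_zero,
            if_neg (by simp [(Fin.castSucc_lt_last k).ne'])]
      | cast j =>
        induction k using Fin.lastCases with
        | last =>
          obtain ⟨s, d, heq, hdiag, hne⟩ := kA b a
          rw [Fin.snoc_last, Fin.snoc_castSucc, dotProduct_comm, dot_mulVec_mulVec,
            heq, smul_mulVec, dotProduct_smul, hyperp' d j, smul_zero,
            if_neg (by simp [(Fin.castSucc_lt_last j).ne])]
        | cast k =>
          rw [Fin.snoc_castSucc, Fin.snoc_castSucc, he a b j k]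
          congr 1
          simp [Prod.ext_iff, Fin.castSucc_inj]
  obtain ⟨e, he⟩ := key n le_rfl
  -- Step 3: assemble the orthogonal matrix.
  refine ⟨Matrix.of fun i aj => (fQ I aj.1 *ᵥ e aj.2) i, ?_, ?_⟩
  · ext ⟨a, j⟩ ⟨b, k⟩
    rw [Matrix.mul_apply, Matrix.one_apply]
    simpa [dotProduct] using he a b j k
  · intro p
    ext ⟨a, j⟩ ⟨b, k⟩
    rw [Matrix.mul_assoc, Matrix.mul_apply]
    have hcol : ∀ i, (I p * Matrix.of fun i aj => (fQ I aj.1 *ᵥ e aj.2) i) i (b, k) =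
        ((∑ d, canQ p d b • fQ I d) *ᵥ e k) i := by
      intro i
      rw [Matrix.mul_apply, ← kM p b, ← Matrix.mulVec_mulVec]
      simp [Matrix.mulVec, dotProduct]
    simp only [Matrix.transpose_apply, Matrix.of_apply, hcol]
    have hsum : ((∑ d, canQ p d b • fQ I d) *ᵥ e k) =
        ∑ d, canQ p d b • (fQ I d *ᵥ e k) := by
      rw [show ((∑ d, canQ p d b • fQ I d) *ᵥ e k) =
          Matrix.mulVec.addMonoidHomLeft (e k) (∑ d, canQ p d b • fQ I d) from rfl, map_sum]
      simp [Matrix.mulVec.addMonoidHomLeft, smul_mulVec]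
    have hdot : (∑ i, (fQ I a *ᵥ e j) i * ((∑ d, canQ p d b • fQ I d) *ᵥ e k) i) =
        (fQ I a *ᵥ e j) ⬝ᵥ ((∑ d, canQ p d b • fQ I d) *ᵥ e k) := rfl
    rw [hdot, hsum, dotProduct_sum']
    simp only [dotProduct_smul, he, smul_eq_mul]
    rw [Matrix.blockDiagonal_apply]
    by_cases hjk : j = k
    · subst hjk
      simp [Finset.sum_ite_eq, Prod.ext_iff]
    · rw [if_neg hjk]
      apply Finset.sum_eq_zero
      intro d _
      rw [if_neg (by simp [Prod.ext_iff, hjk]), mul_zero]
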